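/- Let 𝐏 ⊂ ℤ^n be a finite set with P = Conv(𝐏), let D be a daughter polytope of 𝐏 with associated family 𝒟 = 𝒟(D), let W ∈ 𝒟, and let S be a face of P contained in W. Then for every W' ∈ 𝒟 ∖ {W}, the projection π_S(W') does not intersect the set 𝐏_S = π_S(𝐏) ∩ closure(π_S(P) ∖ π_S(Conv(𝐏 ∖ S))). -/

import Mathlib

open Pointwise Filter
open scoped Classical

noncomputable section

def intLattice (n : ℕ) : AddSubgroup (Fin n → ℝ) where
  carrier := {x | ∀ i, ∃ m : ℤ, x i = (m : ℝ)}
  zero_mem' := fun i => ⟨0, by simp⟩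
  add_mem' := by
    intro a b ha hb i
    obtain ⟨p, hp⟩ := ha i
    obtain ⟨q, hq⟩ := hb i
    exact ⟨p + q, by simp [hp, hq]⟩
  neg_mem' := by
    intro a ha i
    obtain ⟨p, hp⟩ := ha i
    exact ⟨-p, by simp [hp]⟩

/-- Lattice volume (normalized so that a unit simplex of the lattice `L` has
volume `1`) of a `k`-dimensional set `Q`, defined via asymptotic counting of
lattice points in dilations of `Q`. -/
def latVol {E : Type*} [AddCommGroup E] [Module ℝ E] (L : AddSubgroup E)
    (k : ℕ) (Q : Set E) : ℝ :=
  Filter.limsup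
    (fun t : ℕ => (Nat.factorial k : ℝ) *
      (Nat.card ↥(((t : ℝ) • Q) ∩ (L : Set E))) / (t : ℝ) ^ k) Filter.atTop

/-- Mixed volume of the polytopes `Q i`, `i ∈ T`, via inclusion-exclusion of
lattice volumes of Minkowski sums. -/
def mixedVol {E : Type*} [AddCommGroup E] [Module ℝ E] {ι : Type*}
    (L : AddSubgroup E) (T : Finset ι) (Q : ι → Set E) : ℝ :=
  ∑ I ∈ T.powerset,
    if I.Nonempty then
      (-1 : ℝ) ^ (T.card - I.card) * latVol L T.card (∑ i ∈ I, Q i)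
    else 0

/-- `F` is a face of `P`: the set of maximizers over `P` of some linear functional. -/
def IsFaceOf {E : Type*} [AddCommGroup E] [Module ℝ E] (P F : Set E) : Prop :=
  ∃ ξ : E →ₗ[ℝ] ℝ, F = {x ∈ P | ∀ y ∈ P, ξ y ≤ ξ x}

/-- Dimension of (the affine span of) a set. -/
def sdim {E : Type*} [AddCommGroup E] [Module ℝ E] (Q : Set E) : ℕ :=
  Module.finrank ℝ (vectorSpan ℝ Q)

/-- The family D-family: faces of `P` maximal among the faces disjoint from `D`. -/
def DFam {E : Type*} [AddCommGroup E] [Module ℝ E] (P D : Set E) : Set (Set E) :=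
  {F | Maximal (fun G => IsFaceOf P G ∧ G ∩ D = ∅) F}

/-- `D` is a daughter polytope of the finite set `A`. -/
def IsDaughter {E : Type*} [AddCommGroup E] [Module ℝ E] (A : Finset E) (D : Set E) : Prop :=
  D.Nonempty ∧
  (∀ F ∈ DFam (convexHull ℝ (A : Set E)) D, ∀ F' ∈ DFam (convexHull ℝ (A : Set E)) D,
    F ≠ F' → F ∩ F' = ∅) ∧
  D = convexHull ℝ ((A : Set E) \ ⋃ F ∈ DFam (convexHull ℝ (A : Set E)) D, F)

/-- The daughter polytopes `D i`, `i ∈ T`, are semi-interlaced in `A`. -/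
def SemiInterlaced {E : Type*} [AddCommGroup E] [Module ℝ E] {ι : Type*}
    (A : Finset E) (T : Finset ι) (D : ι → Set E) : Prop :=
  (∀ i ∈ T, IsDaughter A (D i)) ∧
  ∀ F, IsFaceOf (convexHull ℝ (A : Set E)) F →
    sdim F ≤ (T.filter fun i => (D i ∩ F).Nonempty).card

/-- A face `F` of `Conv A` is a suture if exactly `dim F` of the `D i` meet it. -/
def IsSuture {E : Type*} [AddCommGroup E] [Module ℝ E] {ι : Type*}
    (A : Finset E) (T : Finset ι) (D : ι → Set E) (F : Set E) : Prop :=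
  IsFaceOf (convexHull ℝ (A : Set E)) F ∧
  (T.filter fun i => (D i ∩ F).Nonempty).card = sdim F


namespace DPAux


variable {E : Type*} [AddCommGroup E] [Module ℝ E]

theorem hullLe {A : Set E} (φ : E →ₗ[ℝ] ℝ) {c : ℝ} (h : ∀ a ∈ A, φ a ≤ c) :
    ∀ x ∈ convexHull ℝ A, φ x ≤ c :=
  fun _ hx => convexHull_min h (convex_halfSpace_le φ.isLinear c) hx

theorem hullGe {A : Set E} (φ : E →ₗ[ℝ] ℝ) {c : ℝ} (h : ∀ a ∈ A, c ≤ φ a) :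
    ∀ x ∈ convexHull ℝ A, c ≤ φ x :=
  fun _ hx => convexHull_min h (convex_halfSpace_ge φ.isLinear c) hx

theorem hullEq {A : Set E} (φ : E →ₗ[ℝ] ℝ) {c : ℝ} (h : ∀ a ∈ A, φ a = c) :
    ∀ x ∈ convexHull ℝ A, φ x = c :=
  fun _ hx => convexHull_min (fun a ha => h a ha ▸ rfl) (convex_hyperplane φ.isLinear c) hx

/-- The argmax face of the convex hull of a finite set is the hull of argmax points. -/
theorem argmax_hull (A : Finset E) (φ : E →ₗ[ℝ] ℝ) :
    {x ∈ convexHull ℝ (A : Set E) | ∀ y ∈ convexHull ℝ (A : Set E), φ y ≤ φ x} =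
      convexHull ℝ ((A.filter fun a => ∀ b ∈ A, φ b ≤ φ a : Finset E) : Set E) := by
  rcases A.eq_empty_or_nonempty with rfl | hA
  · simp
  obtain ⟨amax, hamaxA, hamax⟩ := A.exists_max_image φ hA
  set Af := A.filter fun a => ∀ b ∈ A, φ b ≤ φ a with hAf
  have hAfA : Af ⊆ A := Finset.filter_subset _ _
  apply Set.Subset.antisymm
  · rintro x ⟨hxP, hxmax⟩
    have hxM : φ x = φ amax := by
      have h1 : φ x ≤ φ amax := hullLe φ (fun a ha => hamax a ha) x hxP
      have h2 : φ amax ≤ φ x := hxmax amax (subset_convexHull ℝ _ hamaxA)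
      linarith
    rw [Finset.convexHull_eq] at hxP ⊢
    obtain ⟨w, hw0, hw1, hwx⟩ := hxP
    have hxsum : A.centerMass w id = ∑ a ∈ A, w a • a := by
      rw [A.centerMass_eq_of_sum_1 _ hw1]; simp only [id_eq]
    have hφx : ∑ a ∈ A, w a * φ a = φ amax := by
      have := congrArg φ hwx
      rw [hxsum] at this
      rw [← hxM, ← this, map_sum]
      simp [smul_eq_mul]
    have hkey : ∑ a ∈ A, w a * (φ amax - φ a) = 0 := by
      rw [Finset.sum_congr rfl (fun a _ => mul_sub (w a) (φ amax) (φ a)),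
        Finset.sum_sub_distrib, hφx, ← Finset.sum_mul, hw1]
      ring
    have hzero : ∀ a ∈ A, a ∉ Af → w a = 0 := by
      intro a haA haf
      have hterm := (Finset.sum_eq_zero_iff_of_nonneg
        (fun a ha => mul_nonneg (hw0 a ha) (by linarith [hamax a ha]))).1 hkey a haA
      have : φ a < φ amax := by
        rw [hAf, Finset.mem_filter] at haf
        push_neg at haf
        obtain ⟨b, hbA, hab⟩ := haf haA
        exact lt_of_lt_of_le hab (hamax b hbA)
      rcases mul_eq_zero.1 hterm with h | h
      · exact h
      · linarith
    refine ⟨w, fun a ha => hw0 a (hAfA ha), ?_, ?_⟩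
    · rw [← hw1]
      exact Finset.sum_subset hAfA (fun a ha haf => hzero a ha haf)
    · have hsum1 : ∑ a ∈ Af, w a = 1 := by
        rw [← hw1]; exact Finset.sum_subset hAfA (fun a ha haf => hzero a ha haf)
      rw [Af.centerMass_eq_of_sum_1 _ hsum1, ← hwx, hxsum]
      simp only [id_eq]
      exact Finset.sum_subset hAfA (fun a ha haf => by rw [hzero a ha haf, zero_smul])
  · intro x hx
    have hxA : x ∈ convexHull ℝ (A : Set E) :=
      convexHull_mono (Finset.coe_subset.2 hAfA) hx
    refine ⟨hxA, fun y hy => ?_⟩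
    have hymax : φ y ≤ φ amax := hullLe φ (fun a ha => hamax a ha) y hy
    have hxge : φ amax ≤ φ x := by
      refine hullGe φ (fun a ha => ?_) x hx
      rw [Finset.mem_coe, hAf, Finset.mem_filter] at ha
      exact ha.2 amax hamaxA
    linarith

theorem isFaceOf_argmax (A : Finset E) (φ : E →ₗ[ℝ] ℝ) :
    IsFaceOf (convexHull ℝ (A : Set E))
      (convexHull ℝ ((A.filter fun a => ∀ b ∈ A, φ b ≤ φ a : Finset E) : Set E)) :=
  ⟨φ, (argmax_hull A φ).symm⟩

/-- A face of the hull of a finite set is the hull of the points of the set lying on it. -/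
theorem face_inter (A : Finset E) {F : Set E} (h : IsFaceOf (convexHull ℝ (A : Set E)) F) :
    F = convexHull ℝ ((A : Set E) ∩ F) := by
  obtain ⟨ξ, rfl⟩ := h
  have h2 : ((A.filter fun a => ∀ b ∈ A, ξ b ≤ ξ a : Finset E) : Set E) =
      (A : Set E) ∩ {x ∈ convexHull ℝ (A : Set E) | ∀ y ∈ convexHull ℝ (A : Set E), ξ y ≤ ξ x} := by
    ext a
    simp only [Finset.coe_filter, Set.mem_setOf_eq, Set.mem_inter_iff, Finset.mem_coe,
      Finset.mem_filter]
    constructor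
    · rintro ⟨haA, hmax⟩
      exact ⟨haA, subset_convexHull ℝ _ haA, hullLe ξ hmax⟩
    · rintro ⟨haA, -, hmax⟩
      exact ⟨haA, fun b hbA => hmax b (subset_convexHull ℝ _ hbA)⟩
  calc {x ∈ convexHull ℝ (A : Set E) | ∀ y ∈ convexHull ℝ (A : Set E), ξ y ≤ ξ x}
      = convexHull ℝ ((A.filter fun a => ∀ b ∈ A, ξ b ≤ ξ a : Finset E) : Set E) :=
        argmax_hull A ξ
    _ = _ := by rw [h2]


variable {F : Type*} [NormedAddCommGroup F] [NormedSpace ℝ F] [FiniteDimensional ℝ F]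

/-- The cone generated by `g - q`, `g ∈ G`. -/
def coneAt (G : Finset F) (q : F) : Set F :=
  {w | ∃ lam : F → ℝ, (∀ g ∈ G, 0 ≤ lam g) ∧ w = ∑ g ∈ G, lam g • (g - q)}

theorem zero_mem_coneAt (G : Finset F) (q : F) : (0 : F) ∈ coneAt G q :=
  ⟨0, fun _ _ => le_rfl, by simp⟩

theorem smul_mem_coneAt {G : Finset F} {q w : F} (h : w ∈ coneAt G q) {t : ℝ} (ht : 0 ≤ t) :
    t • w ∈ coneAt G q := by
  obtain ⟨lam, h0, rfl⟩ := h
  exact ⟨fun g => t * lam g, fun g hg => mul_nonneg ht (h0 g hg), by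
    rw [Finset.smul_sum]; exact Finset.sum_congr rfl fun g _ => by rw [mul_smul]⟩

theorem convex_coneAt (G : Finset F) (q : F) : Convex ℝ (coneAt G q) := by
  rintro x ⟨lx, hlx, rfl⟩ y ⟨ly, hly, rfl⟩ a b ha hb _
  refine ⟨fun g => a * lx g + b * ly g, fun g hg =>
    add_nonneg (mul_nonneg ha (hlx g hg)) (mul_nonneg hb (hly g hg)), ?_⟩
  rw [Finset.smul_sum, Finset.smul_sum, ← Finset.sum_add_distrib]
  exact Finset.sum_congr rfl fun g _ => by
    rw [add_smul, mul_smul, mul_smul]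

theorem sub_mem_coneAt {G : Finset F} {q : F} {g : F} (hg : g ∈ G) : g - q ∈ coneAt G q := by
  refine ⟨fun x => if x = g then 1 else 0, fun x _ => by positivity, ?_⟩
  have hterm : ∀ x ∈ G, (if x = g then (1 : ℝ) else 0) • (x - q) =
      if x = g then g - q else 0 := by
    intro x _
    split <;> rename_i h <;> simp [h]
  rw [Finset.sum_congr rfl hterm, Finset.sum_ite_eq' G g (fun _ => g - q), if_pos hg]

/-- Any element of the cone has a representation supported on a linearly independent subset. -/
theorem coneAt_indep_rep {G : Finset F} {q w : F} (h : w ∈ coneAt G q) :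
    ∃ s : Finset F, s ⊆ G ∧ LinearIndependent ℝ (fun g : ↥s => (g : F) - q) ∧
      ∃ lam : F → ℝ, (∀ g ∈ s, 0 ≤ lam g) ∧ w = ∑ g ∈ s, lam g • (g - q) := by
  obtain ⟨lam, h0, rfl⟩ := h
  suffices H : ∀ s : Finset F, ∀ lam : F → ℝ, (∀ g ∈ s, 0 ≤ lam g) →
      ∃ t : Finset F, t ⊆ s ∧ LinearIndependent ℝ (fun g : ↥t => (g : F) - q) ∧
      ∃ lam' : F → ℝ, (∀ g ∈ t, 0 ≤ lam' g) ∧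
        ∑ g ∈ t, lam' g • (g - q) = ∑ g ∈ s, lam g • (g - q) by
    obtain ⟨t, hts, hind, lam', h0', heq⟩ := H G lam h0
    exact ⟨t, hts, hind, lam', h0', heq.symm⟩
  intro s
  induction s using Finset.strongInductionOn with
  | _ s ih =>
    intro lam h0
    by_cases hind : LinearIndependent ℝ (fun g : ↥s => (g : F) - q)
    · exact ⟨s, subset_rfl, hind, lam, h0, rfl⟩
    obtain ⟨c, hc0, i0, hi0⟩ := Fintype.not_linearIndependent_iff.1 hind
    -- extend `c` to a function on `F`
    have hext : ∃ μ : F → ℝ, (∑ g ∈ s, μ g • (g - q) = 0) ∧ ∃ g ∈ s, 0 < μ g := by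
      set μ0 : F → ℝ := fun g => if hg : g ∈ s then c ⟨g, hg⟩ else 0 with hμ0
      have hsum0 : ∑ g ∈ s, μ0 g • (g - q) = 0 := by
        rw [← Finset.sum_coe_sort s (fun g => μ0 g • (g - q)), ← hc0]
        exact Finset.sum_congr rfl fun i _ => by simp [hμ0, i.2]
      rcases lt_trichotomy (μ0 i0) 0 with hneg | hzero | hpos
      · refine ⟨-μ0, by simpa using hsum0, i0, i0.2, by simpa using hneg⟩
      · exfalso; apply hi0; simpa [hμ0] using hzero
      · exact ⟨μ0, hsum0, i0, i0.2, hpos⟩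
    obtain ⟨μ, hμsum, hμpos⟩ := hext
    set pos := s.filter (fun g => 0 < μ g) with hpos
    have hposne : pos.Nonempty := by
      obtain ⟨g, hgs, hgpos⟩ := hμpos
      exact ⟨g, Finset.mem_filter.2 ⟨hgs, hgpos⟩⟩
    set t0 := pos.inf' hposne (fun g => lam g / μ g) with ht0
    obtain ⟨gstar, hgstar, hgstareq⟩ := Finset.exists_mem_eq_inf' hposne (fun g => lam g / μ g)
    have hgstars : gstar ∈ s := (Finset.mem_filter.1 hgstar).1
    have hμgstar : 0 < μ gstar := (Finset.mem_filter.1 hgstar).2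
    have ht0nonneg : 0 ≤ t0 := by
      rw [ht0]
      apply Finset.le_inf'
      intro g hg
      have := Finset.mem_filter.1 hg
      exact div_nonneg (h0 g this.1) this.2.le
    set lam' : F → ℝ := fun g => lam g - t0 * μ g with hlam'
    have hlam'0 : ∀ g ∈ s, 0 ≤ lam' g := by
      intro g hgs
      rw [hlam']
      rcases le_or_gt (μ g) 0 with hle | hlt
      · have : t0 * μ g ≤ 0 := mul_nonpos_of_nonneg_of_nonpos ht0nonneg hle
        have := h0 g hgs; simp only; linarith
      · have hginpos : g ∈ pos := Finset.mem_filter.2 ⟨hgs, hlt⟩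
        have : t0 ≤ lam g / μ g := Finset.inf'_le _ hginpos
        have := (le_div_iff₀ hlt).1 this
        simp only; linarith
    have hlam'sum : ∑ g ∈ s, lam' g • (g - q) = ∑ g ∈ s, lam g • (g - q) := by
      have hterm : ∀ g' ∈ s, lam' g' • (g' - q)
          = lam g' • (g' - q) - t0 • (μ g' • (g' - q)) := by
        intro g' _
        show (lam g' - t0 * μ g') • (g' - q) = _
        rw [sub_smul, mul_smul]
      rw [Finset.sum_congr rfl hterm, Finset.sum_sub_distrib, ← Finset.smul_sum, hμsum,
        smul_zero, sub_zero]
    have hgstarzero : lam' gstar = 0 := by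
      show lam gstar - t0 * μ gstar = 0
      rw [ht0, hgstareq]
      field_simp
      ring
    have herase : ∑ g ∈ s.erase gstar, lam' g • (g - q) = ∑ g ∈ s, lam' g • (g - q) := by
      apply Finset.sum_erase
      rw [hgstarzero, zero_smul]
    obtain ⟨t, hts, hindt, lam'', h0'', heq''⟩ :=
      ih (s.erase gstar) (Finset.erase_ssubset hgstars) lam'
        (fun g hg => hlam'0 g (Finset.mem_of_mem_erase hg))
    exact ⟨t, hts.trans (Finset.erase_subset _ _), hindt, lam'', h0'',
      by rw [heq'', herase, hlam'sum]⟩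

/-- The summation map of the family `g - q`, `g ∈ s`. -/
def sumMap (s : Finset F) (q : F) : (↥s → ℝ) →ₗ[ℝ] F where
  toFun c := ∑ i : ↥s, c i • ((i : F) - q)
  map_add' c d := by
    simp only [Pi.add_apply, add_smul, Finset.sum_add_distrib]
  map_smul' r c := by
    simp only [Pi.smul_apply, smul_eq_mul, RingHom.id_apply, Finset.smul_sum, mul_smul]

theorem sumMap_apply (s : Finset F) (q : F) (c : ↥s → ℝ) :
    sumMap s q c = ∑ i : ↥s, c i • ((i : F) - q) := rfl

/-- Coefficient bound for a linearly independent family. -/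
theorem bound_of_indep (s : Finset F) (q : F)
    (hind : LinearIndependent ℝ (fun g : ↥s => (g : F) - q)) :
    ∃ K > 0, ∀ lam : F → ℝ, ∑ g ∈ s, lam g ≤ K * ‖∑ g ∈ s, lam g • (g - q)‖ := by
  have hinj : Function.Injective (sumMap s q) := by
    rw [← LinearMap.ker_eq_bot]
    apply LinearMap.ker_eq_bot'.mpr
    intro c hc
    funext i
    exact Fintype.linearIndependent_iff.1 hind c hc i
  let e := LinearEquiv.ofInjective (sumMap s q) hinj
  let gmap : ↥(LinearMap.range (sumMap s q)) →L[ℝ] (↥s → ℝ) :=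
    ⟨e.symm.toLinearMap, e.symm.toLinearMap.continuous_of_finiteDimensional⟩
  obtain ⟨K0, hK0pos, hK0⟩ := gmap.bound
  refine ⟨(s.card : ℝ) * K0 + 1, by positivity, ?_⟩
  intro lam
  set c : ↥s → ℝ := fun i => lam ↑i with hc
  have hTc : sumMap s q c = ∑ g ∈ s, lam g • (g - q) := by
    rw [sumMap_apply]
    exact Finset.sum_coe_sort s (fun g => lam g • (g - q))
  have hcnorm : ‖c‖ ≤ K0 * ‖sumMap s q c‖ := by
    have h1 : gmap (e c) = c := e.symm_apply_apply c
    have h2 : ‖e c‖ = ‖sumMap s q c‖ := by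
      have h3 : ((e c : LinearMap.range (sumMap s q)) : F) = sumMap s q c :=
        LinearEquiv.ofInjective_apply (sumMap s q) c
      rw [← h3]
      rfl
    calc ‖c‖ = ‖gmap (e c)‖ := by rw [h1]
      _ ≤ K0 * ‖e c‖ := hK0 _
      _ = K0 * ‖sumMap s q c‖ := by rw [h2]
  have hsum : ∑ g ∈ s, lam g ≤ (s.card : ℝ) * ‖c‖ := by
    rw [← Finset.sum_coe_sort s lam]
    have hb : ∀ i ∈ (Finset.univ : Finset ↥s), c i ≤ ‖c‖ := by
      intro i _
      calc c i ≤ |c i| := le_abs_self _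
        _ ≤ ‖c‖ := norm_le_pi_norm c i
    calc ∑ i : ↥s, lam ↑i = ∑ i : ↥s, c i := rfl
      _ ≤ (Finset.univ : Finset ↥s).card • ‖c‖ := Finset.sum_le_card_nsmul _ _ _ hb
      _ = (s.card : ℝ) * ‖c‖ := by
          rw [Finset.card_univ, Fintype.card_coe, nsmul_eq_mul]
  have hnormnn : (0 : ℝ) ≤ ‖sumMap s q c‖ := norm_nonneg _
  have hcnn : (0 : ℝ) ≤ ‖c‖ := norm_nonneg _
  calc ∑ g ∈ s, lam g ≤ (s.card : ℝ) * ‖c‖ := hsum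
    _ ≤ (s.card : ℝ) * (K0 * ‖sumMap s q c‖) :=
        mul_le_mul_of_nonneg_left hcnorm (by positivity)
    _ ≤ ((s.card : ℝ) * K0 + 1) * ‖sumMap s q c‖ := by nlinarith
    _ = ((s.card : ℝ) * K0 + 1) * ‖∑ g ∈ s, lam g • (g - q)‖ := by rw [hTc]

/-- Global coefficient bound on a finitely generated cone. -/
theorem cone_bound (G : Finset F) (q : F) :
    ∃ K > 0, ∀ w ∈ coneAt G q, ∃ lam : F → ℝ, (∀ g ∈ G, 0 ≤ lam g) ∧
      w = ∑ g ∈ G, lam g • (g - q) ∧ ∑ g ∈ G, lam g ≤ K * ‖w‖ := by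
  have hKs : ∀ s : Finset F, ∃ K > 0,
      LinearIndependent ℝ (fun g : ↥s => (g : F) - q) →
        ∀ lam : F → ℝ, ∑ g ∈ s, lam g ≤ K * ‖∑ g ∈ s, lam g • (g - q)‖ := by
    intro s
    by_cases hind : LinearIndependent ℝ (fun g : ↥s => (g : F) - q)
    · obtain ⟨K, hKpos, hK⟩ := bound_of_indep s q hind
      exact ⟨K, hKpos, fun _ => hK⟩
    · exact ⟨1, one_pos, fun h => absurd h hind⟩
  choose Kf hKfpos hKf using hKs
  set K : ℝ := 1 + ∑ s ∈ G.powerset, Kf s with hK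
  have hKpos : 0 < K := by
    rw [hK]
    have : (0:ℝ) ≤ ∑ s ∈ G.powerset, Kf s :=
      Finset.sum_nonneg fun s _ => (hKfpos s).le
    linarith
  have hKge : ∀ s ∈ G.powerset, Kf s ≤ K := by
    intro s hs
    rw [hK]
    have := Finset.single_le_sum (f := Kf) (fun t _ => (hKfpos t).le) hs
    linarith
  refine ⟨K, hKpos, ?_⟩
  intro w hw
  obtain ⟨s, hsG, hind, lam0, hlam00, hwrep⟩ := coneAt_indep_rep hw
  have hbound : ∑ g ∈ s, lam0 g ≤ Kf s * ‖w‖ := by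
    have := hKf s hind lam0
    rw [← hwrep] at this
    exact this
  set lam : F → ℝ := fun g => if g ∈ s then lam0 g else 0 with hlam
  have hsplit' : ∑ g ∈ G, (if g ∈ s then lam0 g else 0) = ∑ g ∈ s, lam0 g := by
    rw [← Finset.sum_filter, Finset.filter_mem_eq_inter, Finset.inter_eq_right.2 hsG]
  refine ⟨lam, ?_, ?_, ?_⟩
  · intro g hg
    rw [hlam]
    dsimp only
    split
    · exact hlam00 g (by assumption)
    · exact le_rfl
  · rw [hlam]
    have h1 : ∑ g ∈ G, (if g ∈ s then lam0 g else 0) • (g - q) = ∑ g ∈ s, lam0 g • (g - q) := by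
      have : ∀ g ∈ G, (if g ∈ s then lam0 g else 0) • (g - q)
          = if g ∈ s then lam0 g • (g - q) else 0 := by
        intro g _
        split <;> simp
      rw [Finset.sum_congr rfl this, ← Finset.sum_filter,
        Finset.filter_mem_eq_inter, Finset.inter_eq_right.2 hsG]
    rw [h1]
    exact hwrep
  · rw [hlam]
    dsimp only
    rw [hsplit']
    calc ∑ g ∈ s, lam0 g ≤ Kf s * ‖w‖ := hbound
      _ ≤ K * ‖w‖ := mul_le_mul_of_nonneg_right
          (hKge s (Finset.mem_powerset.2 hsG)) (norm_nonneg w)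

/-- A finitely generated cone is closed. -/
theorem cone_isClosed (G : Finset F) (q : F) : IsClosed (coneAt G q) := by
  obtain ⟨K, hKpos, hK⟩ := cone_bound G q
  -- intersection with every closed ball is a compact image
  have hball : ∀ r : ℝ, 0 < r → IsClosed (coneAt G q ∩ Metric.closedBall 0 r) := by
    intro r hr
    set Tg : (↥G → ℝ) → F := fun c => ∑ i : ↥G, c i • ((i : F) - q) with hTg
    have hTgcont : Continuous Tg := by
      apply continuous_finset_sum
      intro i _
      exact (continuous_apply i).smul continuous_const
    set Λ : Set (↥G → ℝ) :=
      {c | (∀ i, 0 ≤ c i) ∧ (∀ i, c i ≤ K * r) ∧ Tg c ∈ Metric.closedBall (0:F) r} with hΛ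
    have hΛclosed : IsClosed Λ := by
      have h1 : IsClosed {c : ↥G → ℝ | ∀ i, 0 ≤ c i} := by
        have he : {c : ↥G → ℝ | ∀ i, 0 ≤ c i} = ⋂ i, {c | 0 ≤ c i} := by
          ext c; simp [Set.mem_iInter]
        rw [he]
        exact isClosed_iInter fun i => isClosed_le continuous_const (continuous_apply i)
      have h2 : IsClosed {c : ↥G → ℝ | ∀ i, c i ≤ K * r} := by
        have he : {c : ↥G → ℝ | ∀ i, c i ≤ K * r} = ⋂ i, {c | c i ≤ K * r} := by
          ext c; simp [Set.mem_iInter]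
        rw [he]
        exact isClosed_iInter fun i => isClosed_le (continuous_apply i) continuous_const
      have h3 : IsClosed {c : ↥G → ℝ | Tg c ∈ Metric.closedBall (0:F) r} :=
        Metric.isClosed_closedBall.preimage hTgcont
      rw [hΛ, Set.setOf_and, Set.setOf_and]
      exact h1.inter (h2.inter h3)
    have hΛcompact : IsCompact Λ := by
      apply IsCompact.of_isClosed_subset ?_ hΛclosed
      · intro c hc
        have : c ∈ Set.pi Set.univ (fun _ : ↥G => Set.Icc (0:ℝ) (K * r)) := by
          intro i _
          exact ⟨hc.1 i, hc.2.1 i⟩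
        exact this
      · exact isCompact_univ_pi fun _ => isCompact_Icc
    have himage : Tg '' Λ = coneAt G q ∩ Metric.closedBall 0 r := by
      apply Set.Subset.antisymm
      · rintro x ⟨c, hc, rfl⟩
        refine ⟨⟨fun g => if hg : g ∈ G then c ⟨g, hg⟩ else 0, ?_, ?_⟩, hc.2.2⟩
        · intro g hg
          dsimp only
          rw [dif_pos hg]
          exact hc.1 _
        · rw [hTg]
          dsimp only
          rw [← Finset.sum_coe_sort G (fun g => (if hg : g ∈ G then c ⟨g, hg⟩ else 0) • (g - q))]
          exact (Finset.sum_congr rfl fun i _ => by rw [dif_pos i.2]).symm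
      · intro w hwpair
        obtain ⟨hw, hwball⟩ := hwpair
        obtain ⟨lam, hlam0, hlamrep, hlamsum⟩ := hK w hw
        have hwnorm : ‖w‖ ≤ r := by
          simpa [Metric.mem_closedBall, dist_zero_right] using hwball
        refine ⟨fun i => lam ↑i, ⟨?_, ?_, ?_⟩, ?_⟩
        · intro i
          exact hlam0 _ i.2
        · intro i
          calc lam ↑i ≤ ∑ g ∈ G, lam g :=
                Finset.single_le_sum (fun g hg => hlam0 g hg) i.2
            _ ≤ K * ‖w‖ := hlamsum
            _ ≤ K * r := mul_le_mul_of_nonneg_left hwnorm hKpos.le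
        · rw [hTg]
          dsimp only
          rw [Finset.sum_coe_sort G (fun g => lam g • (g - q)), ← hlamrep]
          simpa [Metric.mem_closedBall, dist_zero_right] using hwnorm
        · rw [hTg]
          dsimp only
          rw [Finset.sum_coe_sort G (fun g => lam g • (g - q))]
          exact hlamrep.symm
    rw [← himage]
    exact (hΛcompact.image hTgcont).isClosed
  -- now conclude
  apply isClosed_of_closure_subset
  intro x hx
  have h1 : x ∈ closure (coneAt G q ∩ Metric.closedBall 0 (‖x‖ + 1)) := by
    rw [mem_closure_iff] at hx ⊢
    intro o ho hxo
    obtain ⟨y, ⟨hyo, hyball⟩, hyC⟩ :=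
      hx (o ∩ Metric.ball x 1) (ho.inter Metric.isOpen_ball)
        ⟨hxo, Metric.mem_ball_self one_pos⟩
    refine ⟨y, hyo, hyC, ?_⟩
    have hd : ‖y - x‖ < 1 := by
      have : dist y x < 1 := hyball
      rwa [← dist_eq_norm]
    have hyn : ‖y‖ ≤ ‖x‖ + 1 := by
      have := norm_sub_norm_le y x
      linarith
    simpa [Metric.mem_closedBall, dist_zero_right] using hyn
  exact ((hball (‖x‖ + 1) (by positivity)).closure_subset h1).1

/-- Local structure of a polytope at a point: within a small ball, the cone generated by the
vertices coincides with (a subset of) the polytope. -/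
theorem cone_local (G : Finset F) (q : F) (hq : q ∈ convexHull ℝ (G : Set F)) :
    ∃ ε > 0, ∀ y : F, dist y q < ε → y - q ∈ coneAt G q → y ∈ convexHull ℝ (G : Set F) := by
  obtain ⟨K, hKpos, hK⟩ := cone_bound G q
  refine ⟨1 / K, by positivity, ?_⟩
  intro y hydist hyC
  obtain ⟨lam, hlam0, hrep, hsum⟩ := hK (y - q) hyC
  set t : ℝ := ∑ g ∈ G, lam g with ht
  have htnn : 0 ≤ t := Finset.sum_nonneg fun g hg => hlam0 g hg
  have htlt : t < 1 := by
    have h1 : ‖y - q‖ < 1 / K := by rwa [← dist_eq_norm]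
    calc t ≤ K * ‖y - q‖ := hsum
      _ < K * (1 / K) := by
          apply mul_lt_mul_of_pos_left h1 hKpos
      _ = 1 := by field_simp
  have hysum : y = q + (∑ g ∈ G, lam g • g) - t • q := by
    have h2 : ∑ g ∈ G, lam g • (g - q) = (∑ g ∈ G, lam g • g) - t • q := by
      rw [ht, Finset.sum_smul]
      rw [← Finset.sum_sub_distrib]
      exact Finset.sum_congr rfl fun g _ => smul_sub (lam g) g q
    have h3 : y - q = (∑ g ∈ G, lam g • g) - t • q := by rw [hrep, h2]
    have h4 := congrArg (fun z => q + z) h3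
    simpa [← add_sub_assoc] using h4
  rcases eq_or_lt_of_le htnn with hteq | htpos
  · -- t = 0 : all coefficients vanish, y = q
    have hz : ∀ g ∈ G, lam g = 0 := by
      intro g hg
      exact (Finset.sum_eq_zero_iff_of_nonneg hlam0).1 hteq.symm g hg
    have : y - q = 0 := by
      rw [hrep]
      exact Finset.sum_eq_zero fun g hg => by rw [hz g hg, zero_smul]
    have : y = q := by
      have := sub_eq_zero.1 this
      exact this
    rwa [this]
  · -- t > 0 : convex combination of q and the center of mass
    set z : F := G.centerMass lam id with hz
    have hzhull : z ∈ convexHull ℝ (G : Set F) :=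
      G.centerMass_mem_convexHull (fun g hg => hlam0 g hg) (by rw [← ht]; exact htpos)
        (fun g hg => Finset.mem_coe.2 hg)
    have hzval : t • z = ∑ g ∈ G, lam g • g := by
      rw [hz, Finset.centerMass, ← ht, smul_smul, mul_inv_cancel₀ (ne_of_gt htpos), one_smul]
      simp [id_eq]
    have hyz : y = (1 - t) • q + t • z := by
      rw [hzval, hysum]
      module
    rw [hyz]
    exact (convex_convexHull ℝ (G : Set F)) hq hzhull (by linarith) htnn (by ring)


variable {E : Type*} [AddCommGroup E] [Module ℝ E]

/-- Every face of `Conv A` disjoint from `D` is contained in a maximal such face. -/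
theorem subset_maximal_face (A : Finset E) (D : Set E) (F₀ : Set E)
    (hface : IsFaceOf (convexHull ℝ (A : Set E)) F₀) (hdisj : F₀ ∩ D = ∅) :
    ∃ U ∈ DFam (convexHull ℝ (A : Set E)) D, F₀ ⊆ U := by
  classical
  set 𝒮 : Finset (Finset E) := A.powerset.filter
    (fun B => IsFaceOf (convexHull ℝ (A : Set E)) (convexHull ℝ (B : Set E)) ∧
      convexHull ℝ (B : Set E) ∩ D = ∅ ∧ F₀ ⊆ convexHull ℝ (B : Set E)) with h𝒮
  have hcoe0 : ((A.filter (· ∈ F₀) : Finset E) : Set E) = (A : Set E) ∩ F₀ := by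
    ext a; simp [Set.mem_inter_iff]
  have hF₀eq : F₀ = convexHull ℝ ((A.filter (· ∈ F₀) : Finset E) : Set E) := by
    rw [hcoe0]; exact face_inter A hface
  have h0mem : (A.filter (· ∈ F₀)) ∈ 𝒮 := by
    rw [h𝒮, Finset.mem_filter, Finset.mem_powerset]
    exact ⟨Finset.filter_subset _ _, by rw [← hF₀eq]; exact hface,
      by rw [← hF₀eq]; exact hdisj, by rw [← hF₀eq]⟩
  obtain ⟨Bm, hBm𝒮, hBmmax⟩ := Set.Finite.exists_maximalFor id (↑𝒮 : Set (Finset E))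
    (𝒮.finite_toSet) ⟨_, h0mem⟩
  rw [Finset.mem_coe, h𝒮, Finset.mem_filter, Finset.mem_powerset] at hBm𝒮
  obtain ⟨hBmA, hBmface, hBmdisj, hBmF₀⟩ := hBm𝒮
  refine ⟨convexHull ℝ (Bm : Set E), ⟨⟨hBmface, hBmdisj⟩, ?_⟩, hBmF₀⟩
  intro y hy hsub
  set B' : Finset E := A.filter (· ∈ y) with hB'
  have hB'coe : ((B' : Finset E) : Set E) = (A : Set E) ∩ y := by
    ext a; simp [hB', Set.mem_inter_iff]
  have hyeq : y = convexHull ℝ ((B' : Finset E) : Set E) := by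
    rw [hB'coe]; exact face_inter A hy.1
  have hB'mem : B' ∈ 𝒮 := by
    rw [h𝒮, Finset.mem_filter, Finset.mem_powerset]
    refine ⟨Finset.filter_subset _ _, by rw [← hyeq]; exact hy.1, by rw [← hyeq]; exact hy.2, ?_⟩
    rw [← hyeq]
    exact hBmF₀.trans hsub
  have hBmB' : Bm ⊆ B' := by
    intro g hg
    rw [hB', Finset.mem_filter]
    exact ⟨hBmA hg, hsub (subset_convexHull ℝ _ (Finset.mem_coe.2 hg))⟩
  have : Bm = B' := Finset.Subset.antisymm hBmB' (hBmmax (Finset.mem_coe.2 hB'mem) hBmB')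
  rw [hyeq, ← this]

/-- The continuation/sweep argument: starting from the face `W'` and sweeping the linear
functional from `η` towards `θ`, the swept faces stay inside `W'`; this is contradictory when
`θ` exceeds its values on `W'` somewhere on the polytope. -/
theorem sweep (A : Finset E) (D : Set E)
    (hpair : ∀ F ∈ DFam (convexHull ℝ (A : Set E)) D, ∀ F' ∈ DFam (convexHull ℝ (A : Set E)) D,
      F ≠ F' → F ∩ F' = ∅)
    (W' : Set E) (hW' : W' ∈ DFam (convexHull ℝ (A : Set E)) D)
    (η θ : E →ₗ[ℝ] ℝ)
    (hηW : W' = {x ∈ convexHull ℝ (A : Set E) |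
      ∀ y ∈ convexHull ℝ (A : Set E), η y ≤ η x})
    (w' : E) (hw' : w' ∈ W')
    (hθD : ∀ d ∈ D, θ d ≤ θ w')
    (hθW' : ∀ x ∈ W', θ x ≤ θ w')
    (hex : ∃ a ∈ A, θ a ≤ θ w')
    (hθbig : ∃ p ∈ convexHull ℝ (A : Set E), θ w' < θ p) : False := by
  classical
  have hW'D : W' ∩ D = ∅ := hW'.1.2
  have hw'P : w' ∈ convexHull ℝ (A : Set E) := by rw [hηW] at hw'; exact hw'.1
  have hηmax : ∀ y ∈ convexHull ℝ (A : Set E), η y ≤ η w' := by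
    rw [hηW] at hw'; exact hw'.2
  have hAne : (A : Set E).Nonempty := convexHull_nonempty_iff.1 ⟨w', hw'P⟩
  have hAne' : A.Nonempty := by rwa [← Finset.coe_nonempty]
  set m : ℝ := θ w' with hmdef
  set φ : ℝ → (E →ₗ[ℝ] ℝ) := fun c => η + c • θ with hφ
  have hφval : ∀ (c : ℝ) (x : E), φ c x = η x + c * θ x := by
    intro c x
    rw [hφ]
    simp
  set Ac : ℝ → Finset E := fun c => A.filter (fun a => ∀ b ∈ A, φ c b ≤ φ c a) with hAc
  set Fc : ℝ → Set E := fun c => convexHull ℝ ((Ac c : Finset E) : Set E) with hFcdef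
  have hFe : ∀ c, Fc c = {x ∈ convexHull ℝ (A : Set E) |
      ∀ y ∈ convexHull ℝ (A : Set E), φ c y ≤ φ c x} := fun c => (argmax_hull A (φ c)).symm
  have hFcface : ∀ c, IsFaceOf (convexHull ℝ (A : Set E)) (Fc c) := fun c => ⟨φ c, hFe c⟩
  have hAcne : ∀ c, (Ac c).Nonempty := by
    intro c
    obtain ⟨a, ha, hmax⟩ := A.exists_max_image (φ c) hAne'
    exact ⟨a, Finset.mem_filter.2 ⟨ha, hmax⟩⟩
  have hFcne : ∀ c, (Fc c).Nonempty := by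
    intro c
    obtain ⟨a, ha⟩ := hAcne c
    exact ⟨a, subset_convexHull ℝ _ (Finset.mem_coe.2 ha)⟩
  have hF0 : Fc 0 = W' := by
    have hφ0 : φ 0 = η := by rw [hφ]; simp
    rw [hFe 0, hφ0, ← hηW]
  have hφcmax : ∀ c, ∀ x ∈ Fc c, ∀ y ∈ convexHull ℝ (A : Set E), φ c y ≤ φ c x := by
    intro c x hx
    rw [hFe c] at hx
    exact hx.2
  have hFcP : ∀ c, Fc c ⊆ convexHull ℝ (A : Set E) := by
    intro c x hx
    rw [hFe c] at hx
    exact hx.1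
  -- a point of `Fc c` where `θ ≤ m` lies in `W'`
  have hmem : ∀ c, 0 ≤ c → ∀ d ∈ Fc c, θ d ≤ m → d ∈ W' := by
    intro c hc d hd hθd
    have h1 : φ c w' ≤ φ c d := hφcmax c d hd w' hw'P
    rw [hφval, hφval] at h1
    have h2 : η w' ≤ η d := by nlinarith
    rw [hηW]
    exact ⟨hFcP c hd, fun y hy => le_trans (hηmax y hy) h2⟩
  have hFcD : ∀ c, 0 ≤ c → Fc c ∩ D = ∅ := by
    intro c hc
    rw [Set.eq_empty_iff_forall_notMem]
    rintro d ⟨hdF, hdD⟩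
    have hdW' : d ∈ W' := hmem c hc d hdF (hθD d hdD)
    rw [Set.eq_empty_iff_forall_notMem] at hW'D
    exact hW'D d ⟨hdW', hdD⟩
  -- local constancy of the argmax set
  have hloc : ∀ c₀ : ℝ, ∃ δ > 0, ∀ c, |c - c₀| ≤ δ → Ac c ⊆ Ac c₀ := by
    intro c₀
    obtain ⟨bm, hbmA, hbm⟩ := A.exists_max_image (φ c₀) hAne'
    set Kθ : ℝ := 1 + A.sup' hAne' (fun a => |θ a|) with hKθ
    have hKθbound : ∀ a ∈ A, |θ a| ≤ Kθ := by
      intro a ha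
      have := Finset.le_sup' (fun a => |θ a|) ha
      rw [hKθ]; linarith
    have hKθpos : 0 < Kθ := by
      obtain ⟨a₀, ha₀⟩ := hAne'
      have h1 := hKθbound a₀ ha₀
      have h2 := abs_nonneg (θ a₀)
      -- Kθ = 1 + sup ≥ 1 + |θ a₀| - ...
      have h3 := Finset.le_sup' (fun a => |θ a|) ha₀
      rw [hKθ]; linarith
    set sbad := A.filter (fun a => ¬ ∀ b ∈ A, φ c₀ b ≤ φ c₀ a) with hsbad
    rcases sbad.eq_empty_or_nonempty with hempty | hsne
    · refine ⟨1, one_pos, fun c _ => ?_⟩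
      intro a ha
      have haA : a ∈ A := (Finset.mem_filter.1 ha).1
      refine Finset.mem_filter.2 ⟨haA, ?_⟩
      by_contra hcon
      have : a ∈ sbad := Finset.mem_filter.2 ⟨haA, hcon⟩
      rw [hempty] at this
      exact absurd this (Finset.notMem_empty a)
    · have hgap : ∀ a ∈ sbad, 0 < φ c₀ bm - φ c₀ a := by
        intro a ha
        obtain ⟨haA, hnot⟩ := Finset.mem_filter.1 ha
        push_neg at hnot
        obtain ⟨b, hbA, hab⟩ := hnot
        have := hbm b hbA
        linarith
      set δ := sbad.inf' hsne (fun a => (φ c₀ bm - φ c₀ a) / (4 * Kθ)) with hδdef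
      have hδpos : 0 < δ := by
        rw [hδdef, Finset.lt_inf'_iff]
        intro a ha
        exact div_pos (hgap a ha) (by positivity)
      refine ⟨δ, hδpos, fun c hc => ?_⟩
      intro a ha
      obtain ⟨haA, hamax⟩ := Finset.mem_filter.1 ha
      refine Finset.mem_filter.2 ⟨haA, ?_⟩
      by_contra hcon
      have hasbad : a ∈ sbad := Finset.mem_filter.2 ⟨haA, hcon⟩
      have hδa : δ ≤ (φ c₀ bm - φ c₀ a) / (4 * Kθ) :=
        Finset.inf'_le (fun a => (φ c₀ bm - φ c₀ a) / (4 * Kθ)) hasbad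
      have hshift : ∀ x ∈ A, |φ c x - φ c₀ x| ≤ δ * Kθ := by
        intro x hx
        have heq : φ c x - φ c₀ x = (c - c₀) * θ x := by
          rw [hφval, hφval]; ring
        rw [heq, abs_mul]
        exact mul_le_mul hc (hKθbound x hx) (abs_nonneg _) hδpos.le
      have h1 : φ c bm ≤ φ c a := hamax bm hbmA
      have h2 := abs_le.1 (hshift bm hbmA)
      have h3 := abs_le.1 (hshift a haA)
      have hgpos := hgap a hasbad
      have hq : δ * Kθ ≤ (φ c₀ bm - φ c₀ a) / 4 := by
        calc δ * Kθ ≤ ((φ c₀ bm - φ c₀ a) / (4 * Kθ)) * Kθ :=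
              mul_le_mul_of_nonneg_right hδa hKθpos.le
          _ = (φ c₀ bm - φ c₀ a) / 4 := by field_simp
      have hlin : φ c₀ bm - φ c₀ a ≤ 2 * (δ * Kθ) := by
        linarith [h2.1, h3.2]
      nlinarith [hq, hgpos, hlin]
  -- a large sweep parameter
  obtain ⟨p, hpP, hθpbig⟩ := hθbig
  obtain ⟨amax, hamaxA, hamax⟩ := A.exists_max_image θ hAne'
  have hΘp : θ p ≤ θ amax :=
    hullLe θ (fun a ha => hamax a (Finset.mem_coe.1 ha)) p hpP
  have hmΘ : m < θ amax := lt_of_lt_of_le hθpbig hΘp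
  obtain ⟨a₀, ha₀A, ha₀m⟩ := hex
  set sl := A.filter (fun a => θ a < θ amax) with hsl
  have hslne : sl.Nonempty := ⟨a₀, Finset.mem_filter.2 ⟨ha₀A, lt_of_le_of_lt ha₀m hmΘ⟩⟩
  set cbig : ℝ := 1 + max 0 (sl.sup' hslne (fun a => (η a - η amax) / (θ amax - θ a)))
    with hcbig
  have hcbigpos : 0 < cbig := by
    have := le_max_left 0 (sl.sup' hslne (fun a => (η a - η amax) / (θ amax - θ a)))
    rw [hcbig]; linarith
  have hbigmax : ∀ a ∈ Ac cbig, θ a = θ amax := by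
    intro a ha
    obtain ⟨haA, hamaxc⟩ := Finset.mem_filter.1 ha
    by_contra hne
    have hlt : θ a < θ amax := lt_of_le_of_ne (hamax a haA) hne
    have hasl : a ∈ sl := Finset.mem_filter.2 ⟨haA, hlt⟩
    have h1 := hamaxc amax hamaxA
    rw [hφval, hφval] at h1
    have h4 : cbig * (θ amax - θ a) ≤ η a - η amax := by
      have hrw : cbig * (θ amax - θ a) = cbig * θ amax - cbig * θ a := by ring
      linarith
    have h5 : cbig ≤ (η a - η amax) / (θ amax - θ a) :=
      (le_div_iff₀ (by linarith)).2 h4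
    have h6 : (η a - η amax) / (θ amax - θ a) ≤
        sl.sup' hslne (fun a => (η a - η amax) / (θ amax - θ a)) :=
      Finset.le_sup' (fun a => (η a - η amax) / (θ amax - θ a)) hasl
    have h7 := le_max_right 0 (sl.sup' hslne (fun a => (η a - η amax) / (θ amax - θ a)))
    rw [hcbig] at h5
    linarith
  have hFcbigW' : ∀ x ∈ Fc cbig, x ∉ W' := by
    intro x hx hxW'
    have hθx : θ x = θ amax :=
      hullEq θ (fun a ha => hbigmax a (Finset.mem_coe.1 ha)) x hx
    have := hθW' x hxW'
    linarith
  -- the infimum argument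
  set bad := {c : ℝ | 0 ≤ c ∧ ¬ Fc c ⊆ W'} with hbaddef
  have hcbigbad : cbig ∈ bad := by
    refine ⟨hcbigpos.le, fun hsubW => ?_⟩
    obtain ⟨x, hx⟩ := hFcne cbig
    exact hFcbigW' x hx (hsubW hx)
  have hbdd : BddBelow bad := ⟨0, fun c hc => hc.1⟩
  set t := sInf bad with htdef
  have ht0 : 0 ≤ t := le_csInf ⟨cbig, hcbigbad⟩ (fun b hb => hb.1)
  obtain ⟨δ, hδpos, hδ⟩ := hloc t
  have hgoodlt : ∀ c, 0 ≤ c → c < t → Fc c ⊆ W' := by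
    intro c h0 hlt
    by_contra hcon
    have hcbad : c ∈ bad := ⟨h0, hcon⟩
    have := csInf_le hbdd hcbad
    rw [← htdef] at this
    linarith
  have hgoodt : Fc t ⊆ W' := by
    rcases eq_or_lt_of_le ht0 with heq | hpos
    · rw [← heq, hF0]
    · set c₁ := max (t - δ) (t / 2) with hc₁
      have hc₁lt : c₁ < t := max_lt (by linarith) (by linarith)
      have hc₁0 : 0 ≤ c₁ := le_trans (by linarith) (le_max_right _ _)
      have hc₁δ : |c₁ - t| ≤ δ := by
        rw [abs_le]
        constructor
        · have := le_max_left (t - δ) (t / 2); linarith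
        · linarith
      have hFsub1 : Fc c₁ ⊆ Fc t := convexHull_mono (Finset.coe_subset.2 (hδ c₁ hc₁δ))
      have hgc₁ : Fc c₁ ⊆ W' := hgoodlt c₁ hc₁0 hc₁lt
      obtain ⟨U, hU, hFU⟩ := subset_maximal_face A D (Fc t) (hFcface t) (hFcD t ht0)
      have hUW' : U = W' := by
        by_contra hne2
        have hdisj := hpair U hU W' hW' hne2
        obtain ⟨x, hx⟩ := hFcne c₁
        rw [Set.eq_empty_iff_forall_notMem] at hdisj
        exact hdisj x ⟨hFU (hFsub1 hx), hgc₁ hx⟩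
      rw [← hUW']
      exact hFU
  have hsInflt : sInf bad < t + δ := by rw [← htdef]; linarith
  obtain ⟨b, hbbad, hblt⟩ := (csInf_lt_iff hbdd ⟨cbig, hcbigbad⟩).1 hsInflt
  have htb : t ≤ b := by rw [htdef]; exact csInf_le hbdd hbbad
  have hbsub : Ac b ⊆ Ac t := by
    apply hδ b
    rw [abs_le]
    constructor <;> linarith
  have hFb : Fc b ⊆ W' := (convexHull_mono (Finset.coe_subset.2 hbsub)).trans hgoodt
  exact hbbad.2 hFb

end DPAux

/-- **Projections of the other maximal faces avoid `A_S` (Lemma "formal").**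
Let `D` be a daughter polytope of `A`, `W ∈ 𝒟(D)`, and `S ⊆ W` a face of
`P = Conv A`. Then for every `W' ∈ 𝒟(D)` with `W' ≠ W`, the projection
`π_S(W')` does not meet `A_S = π_S(A) ∩ closure (π_S(P) ∖ π_S(Conv (A ∖ S)))`. -/
theorem daughter_projection_avoids (n : ℕ) (A : Finset (Fin n → ℝ))
    (hlat : ∀ p ∈ A, p ∈ intLattice n)
    (P : Set (Fin n → ℝ)) (hP : P = convexHull ℝ (A : Set (Fin n → ℝ)))
    (D : Set (Fin n → ℝ)) (hD : IsDaughter A D)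
    (W : Set (Fin n → ℝ)) (hW : W ∈ DFam P D)
    (S : Set (Fin n → ℝ)) (hS : IsFaceOf P S) (hSW : S ⊆ W) :
    ∀ W' ∈ DFam P D, W' ≠ W →
      ((vectorSpan ℝ S).mkQ '' W') ∩
        (((vectorSpan ℝ S).mkQ '' (A : Set (Fin n → ℝ))) ∩
          closure (((vectorSpan ℝ S).mkQ '' P) \
            ((vectorSpan ℝ S).mkQ '' convexHull ℝ ((A : Set (Fin n → ℝ)) \ S)))) = ∅ := by
  subst hP
  intro W' hW' hne
  rw [Set.eq_empty_iff_forall_notMem]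
  rintro q ⟨⟨w', hw'W', rfl⟩, -, hqcl⟩
  haveI hVclosed : IsClosed ((vectorSpan ℝ S : Submodule ℝ (Fin n → ℝ)) : Set (Fin n → ℝ)) :=
    Submodule.closed_of_finiteDimensional _
  obtain ⟨hW'face, hW'D⟩ := hW'.1
  obtain ⟨η, hηW⟩ := hW'face
  have hw'P : w' ∈ convexHull ℝ (A : Set (Fin n → ℝ)) := by
    rw [hηW] at hw'W'; exact hw'W'.1
  have hWW' : W' ∩ W = ∅ := hD.2.1 W' hW' W hW hne
  have hSW' : ∀ x ∈ S, x ∉ W' := by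
    intro x hxS hxW'
    rw [Set.eq_empty_iff_forall_notMem] at hWW'
    exact hWW' x ⟨hxW', hSW hxS⟩
  have hW'eq : W' = convexHull ℝ ((A : Set (Fin n → ℝ)) ∩ W') :=
    DPAux.face_inter A ⟨η, hηW⟩
  have hW'Q : W' ⊆ convexHull ℝ ((A : Set (Fin n → ℝ)) \ S) := by
    rw [hW'eq]
    apply convexHull_mono
    rintro a ⟨haA, haW'⟩
    exact ⟨haA, fun haS => hSW' a haS haW'⟩
  classical
  set AS : Finset (Fin n → ℝ) := A.filter (fun a => a ∉ S) with hASdef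
  have hAScoe : (AS : Set (Fin n → ℝ)) = (A : Set (Fin n → ℝ)) \ S := by
    ext a
    simp [hASdef, Set.mem_diff]
  set G : Finset ((Fin n → ℝ) ⧸ vectorSpan ℝ S) := AS.image (vectorSpan ℝ S).mkQ with hGdef
  have hGcoe : (G : Set ((Fin n → ℝ) ⧸ vectorSpan ℝ S)) =
      (vectorSpan ℝ S).mkQ '' ((A : Set (Fin n → ℝ)) \ S) := by
    rw [hGdef, Finset.coe_image, hAScoe]
  have hQimg : (vectorSpan ℝ S).mkQ '' (convexHull ℝ ((A : Set (Fin n → ℝ)) \ S)) =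
      convexHull ℝ (G : Set ((Fin n → ℝ) ⧸ vectorSpan ℝ S)) := by
    rw [(vectorSpan ℝ S).mkQ.image_convexHull, hGcoe]
  have hq0 : (vectorSpan ℝ S).mkQ w' ∈ convexHull ℝ (G : Set ((Fin n → ℝ) ⧸ vectorSpan ℝ S)) := by
    rw [← hQimg]
    exact ⟨w', hW'Q hw'W', rfl⟩
  by_cases hsub : ∀ y ∈ (vectorSpan ℝ S).mkQ '' (convexHull ℝ (A : Set (Fin n → ℝ))),
      y - (vectorSpan ℝ S).mkQ w' ∈ DPAux.coneAt G ((vectorSpan ℝ S).mkQ w')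
  · -- the polytope is locally contained in the cone at `q`; contradicts the closure condition
    obtain ⟨ε, hεpos, hloc⟩ := DPAux.cone_local G ((vectorSpan ℝ S).mkQ w') hq0
    rw [Metric.mem_closure_iff] at hqcl
    obtain ⟨y, hy, hydist⟩ := hqcl ε hεpos
    obtain ⟨hyP, hyQ⟩ := hy
    apply hyQ
    rw [hQimg]
    refine hloc y ?_ (hsub y hyP)
    rw [dist_comm] at hydist
    exact hydist
  · -- otherwise separate and run the sweep argument
    push_neg at hsub
    obtain ⟨pbar, hpbarP, hpbarC⟩ := hsub
    obtain ⟨f, u, hfC, hfp⟩ := geometric_hahn_banach_closed_point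
      (DPAux.convex_coneAt G ((vectorSpan ℝ S).mkQ w'))
      (DPAux.cone_isClosed G ((vectorSpan ℝ S).mkQ w')) hpbarC
    have hu0 : 0 < u := by
      have := hfC 0 (DPAux.zero_mem_coneAt G ((vectorSpan ℝ S).mkQ w'))
      simpa using this
    have hfC0 : ∀ w ∈ DPAux.coneAt G ((vectorSpan ℝ S).mkQ w'), f w ≤ 0 := by
      intro w hw
      by_contra hpos
      push_neg at hpos
      have h2 : ((u + 1) / f w) • w ∈ DPAux.coneAt G ((vectorSpan ℝ S).mkQ w') :=
        DPAux.smul_mem_coneAt hw (by positivity)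
      have h3 := hfC _ h2
      rw [map_smul, smul_eq_mul] at h3
      have h4 : (u + 1) / f w * f w = u + 1 := by field_simp
      rw [h4] at h3
      linarith
    set θ : (Fin n → ℝ) →ₗ[ℝ] ℝ :=
      (f : ((Fin n → ℝ) ⧸ vectorSpan ℝ S) →ₗ[ℝ] ℝ).comp (vectorSpan ℝ S).mkQ with hθdef
    have hθval : ∀ x, θ x = f ((vectorSpan ℝ S).mkQ x) := fun x => rfl
    have hθAS : ∀ a ∈ AS, θ a ≤ θ w' := by
      intro a ha
      have h1 : (vectorSpan ℝ S).mkQ a - (vectorSpan ℝ S).mkQ w' ∈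
          DPAux.coneAt G ((vectorSpan ℝ S).mkQ w') :=
        DPAux.sub_mem_coneAt (Finset.mem_image_of_mem _ ha)
      have h2 := hfC0 _ h1
      rw [map_sub] at h2
      rw [hθval, hθval]
      linarith
    have hθhull : ∀ x ∈ convexHull ℝ ((A : Set (Fin n → ℝ)) \ S), θ x ≤ θ w' := by
      rw [← hAScoe]
      exact DPAux.hullLe θ (fun a ha => hθAS a (Finset.mem_coe.1 ha))
    refine DPAux.sweep A D hD.2.1 W' hW' η θ hηW w' hw'W' ?_ ?_ ?_ ?_
    · -- θ is bounded by m on D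
      intro d hdD
      rw [hD.2.2] at hdD
      refine DPAux.hullLe θ (fun a ha => ?_) d hdD
      obtain ⟨haA, haU⟩ := ha
      refine hθhull a (subset_convexHull ℝ _ ⟨haA, fun haS => ?_⟩)
      exact haU (Set.mem_biUnion hW (hSW haS))
    · -- θ is bounded by m on W'
      intro x hxW'
      exact hθhull x (hW'Q hxW')
    · -- some point of A has θ ≤ m
      have hne' : ((A : Set (Fin n → ℝ)) ∩ W').Nonempty := by
        rw [← convexHull_nonempty_iff (𝕜 := ℝ), ← hW'eq]
        exact ⟨w', hw'W'⟩
      obtain ⟨a, haA, haW'⟩ := hne'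
      exact ⟨a, Finset.mem_coe.1 haA, hθhull a (hW'Q haW')⟩
    · -- some point of the polytope has θ > m
      obtain ⟨p, hpP, hpeq⟩ := hpbarP
      refine ⟨p, hpP, ?_⟩
      have h5 : 0 < f (pbar - (vectorSpan ℝ S).mkQ w') := lt_trans hu0 hfp
      rw [map_sub] at h5
      rw [hθval w', hθval p, hpeq]
      linarith

end
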